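/- Let Ω(b) = b³ + 18b + 3√3√(b⁴ + 11b² - 1) and x(b) = (Ω^{2/3} + bΩ^{1/3} + b² + 3)/(3Ω^{1/3}) for b ≥ 1. Then lim_{b→∞} x(b)/b = 1; consequently, in the asymptotic optimal configuration, the optimal age threshold A* satisfies A*/(λcr²) → e and the optimal time-average AoI satisfies Δ̄*/(λcr²) → e/2 as λcr² → ∞ (with η = 1, ignoring noise so θr^α/ρ terms vanish). -/

import Mathlib

open Filter Real

private lemma stmt18_aux2 (X p c : ℝ) : (X / c - 1 / c) / p = ((X - 1) / p) / c := by
  ring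

private lemma stmt18_aux3 (X p c : ℝ) :
    (X / c) / (2 * p) + 1 / (2 * p * (X * c)) + 1 / 2 * (1 / c)
      = (X / (2 * p) + 1 / (2 * p * X) + 1 / 2) / c := by
  ring

/-- scaling law, Corollary 5: with
Ω(b) = b³ + 18b + 3√3√(b⁴+11b²-1) and Cardano root
x(b) = (Ω^{2/3} + bΩ^{1/3} + b² + 3)/(3Ω^{1/3}) of x³ - bx² - x - b = 0, one has
x(b)/b → 1 as b → ∞; consequently, with p_s(b) = exp(-b/x(b)) (η = 1, no noise),
the optimal age threshold A*(b) = (x(b)-1)/p_s(b) satisfies A*(b)/b → e and the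
optimal time-average AoI
Δ̄*(b) = x(b)/(2p_s(b)) + 1/(2p_s(b)x(b)) + 1/2 satisfies Δ̄*(b)/b → e/2. -/
theorem stmt_18 :
    let Ω : ℝ → ℝ := fun b =>
      b ^ 3 + 18 * b + 3 * Real.sqrt 3 * Real.sqrt (b ^ 4 + 11 * b ^ 2 - 1)
    let x : ℝ → ℝ := fun b =>
      ((Ω b) ^ ((2:ℝ)/3) + b * (Ω b) ^ ((1:ℝ)/3) + b ^ 2 + 3) / (3 * (Ω b) ^ ((1:ℝ)/3))
    let ps : ℝ → ℝ := fun b => Real.exp (-(b / x b))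
    Filter.Tendsto (fun b => x b / b) Filter.atTop (nhds 1) ∧
    Filter.Tendsto (fun b => ((x b - 1) / ps b) / b) Filter.atTop
      (nhds (Real.exp 1)) ∧
    Filter.Tendsto
      (fun b => (x b / (2 * ps b) + 1 / (2 * ps b * x b) + 1 / 2) / b)
      Filter.atTop (nhds (Real.exp 1 / 2)) := by
  intro Ω x ps
  have hinv : Tendsto (fun b : ℝ => b⁻¹) atTop (nhds 0) := tendsto_inv_atTop_zero
  have hΩpos : ∀ b : ℝ, 1 ≤ b → 0 < Ω b := by
    intro b hb
    have hb0 : 0 < b := lt_of_lt_of_le one_pos hb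
    have h1 : 0 ≤ Real.sqrt (b ^ 4 + 11 * b ^ 2 - 1) := Real.sqrt_nonneg _
    have h2 : 0 ≤ Real.sqrt 3 := Real.sqrt_nonneg _
    have : 0 < b ^ 3 + 18 * b := by positivity
    simp only [Ω]
    nlinarith
  -- limit of Ω b / b^3
  have harg : Tendsto (fun b : ℝ => (b⁻¹) ^ 2 + 11 * (b⁻¹) ^ 4 - (b⁻¹) ^ 6) atTop (nhds 0) := by
    have := ((hinv.pow 2).add ((hinv.pow 4).const_mul 11)).sub (hinv.pow 6)
    simpa using this
  have hsqrt : Tendsto (fun b : ℝ => Real.sqrt ((b⁻¹) ^ 2 + 11 * (b⁻¹) ^ 4 - (b⁻¹) ^ 6))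
      atTop (nhds 0) := by
    have := (Real.continuous_sqrt.tendsto 0).comp harg
    simpa [Function.comp_def] using this
  have hΩ3 : Tendsto (fun b => Ω b / b ^ 3) atTop (nhds 1) := by
    have hlim : Tendsto (fun b : ℝ =>
        1 + 18 * (b⁻¹) ^ 2 + 3 * Real.sqrt 3 * Real.sqrt ((b⁻¹) ^ 2 + 11 * (b⁻¹) ^ 4 - (b⁻¹) ^ 6))
        atTop (nhds 1) := by
      have hc : Tendsto (fun _ : ℝ => (1:ℝ)) atTop (nhds 1) := tendsto_const_nhds
      have := (hc.add ((hinv.pow 2).const_mul 18)).add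
        (hsqrt.const_mul (3 * Real.sqrt 3))
      simpa using this
    refine hlim.congr' ?_
    filter_upwards [eventually_ge_atTop (1:ℝ)] with b hb
    have hb0 : 0 < b := lt_of_lt_of_le one_pos hb
    have hpoly : 0 ≤ b ^ 4 + 11 * b ^ 2 - 1 := by nlinarith
    have ht : 0 < b⁻¹ := inv_pos.mpr hb0
    have ht1 : b⁻¹ ≤ 1 := inv_le_one_of_one_le₀ hb
    have h64 : (b⁻¹) ^ 6 ≤ (b⁻¹) ^ 4 := pow_le_pow_of_le_one ht.le ht1 (by norm_num)
    have hpos' : 0 ≤ (b⁻¹) ^ 2 + 11 * (b⁻¹) ^ 4 - (b⁻¹) ^ 6 := by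
      have := pow_nonneg ht.le 2
      have := pow_nonneg ht.le 4
      linarith
    have h1 : Real.sqrt (b ^ 4 + 11 * b ^ 2 - 1)
        = Real.sqrt ((b⁻¹) ^ 2 + 11 * (b⁻¹) ^ 4 - (b⁻¹) ^ 6) * b ^ 3 := by
      rw [← Real.sqrt_sq (by positivity : (0:ℝ) ≤ b ^ 3), ← Real.sqrt_mul hpos']
      congr 1
      field_simp
    simp only [Ω]
    rw [h1]
    field_simp
  -- limit of u b := Ω^{1/3}/b
  have hu : Tendsto (fun b => (Ω b) ^ ((1:ℝ)/3) / b) atTop (nhds 1) := by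
    have hlim : Tendsto (fun b => (Ω b / b ^ 3) ^ ((1:ℝ)/3)) atTop (nhds 1) := by
      have := hΩ3.rpow_const (p := (1:ℝ)/3) (Or.inl one_ne_zero)
      simpa using this
    refine hlim.congr' ?_
    filter_upwards [eventually_ge_atTop (1:ℝ)] with b hb
    have hb0 : 0 < b := lt_of_lt_of_le one_pos hb
    have hΩb := hΩpos b hb
    rw [Real.div_rpow hΩb.le (by positivity)]
    congr 1
    rw [← Real.rpow_natCast b 3, ← Real.rpow_mul hb0.le]
    norm_num
  -- limit of x b / b
  have hx1 : Tendsto (fun b => x b / b) atTop (nhds 1) := by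
    have hnum : Tendsto (fun b => ((Ω b) ^ ((1:ℝ)/3) / b) ^ 2 + (Ω b) ^ ((1:ℝ)/3) / b
        + 1 + 3 * (b⁻¹) ^ 2) atTop (nhds 3) := by
      have hc1 : Tendsto (fun _ : ℝ => (1:ℝ)) atTop (nhds 1) := tendsto_const_nhds
      have := (((hu.pow 2).add hu).add hc1).add ((hinv.pow 2).const_mul 3)
      norm_num at this
      convert this using 2
      norm_num
    have hden : Tendsto (fun b => 3 * ((Ω b) ^ ((1:ℝ)/3) / b)) atTop (nhds 3) := by
      simpa using hu.const_mul 3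
    have hlim := hnum.div hden (by norm_num)
    norm_num at hlim
    refine hlim.congr' ?_
    filter_upwards [eventually_ge_atTop (1:ℝ)] with b hb
    have hb0 : 0 < b := lt_of_lt_of_le one_pos hb
    have hΩb := hΩpos b hb
    have hv : 0 < (Ω b) ^ ((1:ℝ)/3) := Real.rpow_pos_of_pos hΩb _
    have h2 : (Ω b) ^ ((2:ℝ)/3) = ((Ω b) ^ ((1:ℝ)/3)) ^ 2 := by
      rw [← Real.rpow_natCast ((Ω b) ^ ((1:ℝ)/3)) 2, ← Real.rpow_mul hΩb.le]
      norm_num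
    simp only [x, Pi.div_apply]
    rw [h2]
    field_simp
  refine ⟨hx1, ?_, ?_⟩ <;>
  · -- common limits
    have hbx : Tendsto (fun b => b / x b) atTop (nhds 1) := by
      have := hx1.inv₀ one_ne_zero
      simpa [inv_div] using this
    have hps : Tendsto ps atTop (nhds (Real.exp (-1))) := by
      have := (Real.continuous_exp.tendsto (-1)).comp hbx.neg
      simpa [ps, Function.comp_def] using this
    have hxtop : Tendsto x atTop atTop := by
      have h := hx1.pos_mul_atTop one_pos tendsto_id
      refine h.congr' ?_
      filter_upwards [eventually_ge_atTop (1:ℝ)] with b hb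
      have hb0 : b ≠ 0 := (lt_of_lt_of_le one_pos hb).ne'
      simp [div_mul_cancel₀ _ hb0]
    have h1b : Tendsto (fun b : ℝ => 1 / b) atTop (nhds 0) := by
      simpa [one_div] using hinv
    first
    | -- second conjunct
      (have h : Tendsto (fun b => (x b / b - 1 / b) / ps b) atTop
           (nhds (((1:ℝ) - 0) / Real.exp (-1))) := (hx1.sub h1b).div hps (Real.exp_ne_zero _)
       have hval : ((1:ℝ) - 0) / Real.exp (-1) = Real.exp 1 := by
         rw [Real.exp_neg]; field_simp; simp
       rw [← hval]
       exact h.congr fun b => stmt18_aux2 (x b) (ps b) b)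
    | -- third conjunct
      (have hxb : Tendsto (fun b => x b * b) atTop atTop := hxtop.atTop_mul_atTop₀ tendsto_id
       have hD : Tendsto (fun b => 2 * ps b * (x b * b)) atTop atTop :=
         (hps.const_mul 2).pos_mul_atTop (by positivity) hxb
       have t1 : Tendsto (fun b => (x b / b) / (2 * ps b)) atTop
           (nhds (1 / (2 * Real.exp (-1)))) :=
         hx1.div (hps.const_mul 2) (by positivity)
       have t2 : Tendsto (fun b => 1 / (2 * ps b * (x b * b))) atTop (nhds 0) := by
         have h0 := hD.inv_tendsto_atTop
         exact h0.congr fun b => by simp [one_div]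
       have t3 : Tendsto (fun b : ℝ => 1 / 2 * (1 / b)) atTop (nhds 0) := by
         simpa using h1b.const_mul (1/2 : ℝ)
       have h := (t1.add t2).add t3
       have hval : 1 / (2 * Real.exp (-1)) + 0 + 0 = Real.exp 1 / 2 := by
         rw [Real.exp_neg]; field_simp; simp
       rw [← hval]
       exact h.congr fun b => stmt18_aux3 (x b) (ps b) b)
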